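/- Let d, q₁, q₂, q₃ be positive integers, let k be an integer, and let ζ = exp(2π√(−1)·k/d) ∈ ℂ. Then, as T tends to ζ within the set {T ∈ ℂ : T^{q_j} ≠ 1 for j = 1,2,3}, the function Φ(T) = T^{−d}·∏_{j=1}^{3} (T^d − T^{q_j})/(T^{q_j} − 1) tends to ∏_{j=1}^{3} ( (d/q_j)·[d ∣ k·q_j] − 1 ), where [P] denotes 1 if the proposition P holds and 0 otherwise. -/

import Mathlib

open Filter Topology Complex

lemma pow_root_eq_one {d : ℕ} (hd : 0 < d) (k : ℤ) (q : ℕ) :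
    Complex.exp (2 * Real.pi * Complex.I * k / d) ^ q
      = Complex.exp ((((k * q : ℤ) : ℂ) / d) * (2 * Real.pi * Complex.I)) := by
  rw [← Complex.exp_nat_mul]
  congr 1
  have hd' : (d : ℂ) ≠ 0 := Nat.cast_ne_zero.mpr hd.ne'
  push_cast
  field_simp

lemma root_pow_eq_one_iff {d : ℕ} (hd : 0 < d) (k : ℤ) (q : ℕ) :
    Complex.exp (2 * Real.pi * Complex.I * k / d) ^ q = 1 ↔ (d : ℤ) ∣ k * q := by
  rw [pow_root_eq_one hd k q, Complex.exp_eq_one_iff]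
  have hd' : (d : ℂ) ≠ 0 := Nat.cast_ne_zero.mpr hd.ne'
  constructor
  · rintro ⟨n, hn⟩
    have h2 : (2 * (Real.pi : ℂ) * Complex.I) ≠ 0 := by
      simp [Real.pi_ne_zero, Complex.I_ne_zero]
    have : (((k * q : ℤ) : ℂ) / d) = n := by
      field_simp at hn ⊢
      apply mul_right_cancel₀ h2
      linear_combination (2 * (Real.pi : ℂ) * Complex.I) * hn
    refine ⟨n, ?_⟩
    have h3 : ((k * q : ℤ) : ℂ) = ((d * n : ℤ) : ℂ) := by
      push_cast
      field_simp at this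
      exact_mod_cast this
    exact_mod_cast h3
  · rintro ⟨n, hn⟩
    refine ⟨n, ?_⟩
    rw [hn]
    push_cast
    field_simp

/-- limit of a single factor -/
lemma factor_limit (d q : ℕ) (hd : 0 < d) (hq : 0 < q) (ζ : ℂ)
    (hζd : ζ ^ d = 1) :
    Tendsto (fun T : ℂ => (T ^ d - T ^ q) / (T ^ q - 1))
      (𝓝[{T : ℂ | T ^ q ≠ 1}] ζ)
      (𝓝 (if ζ ^ q = 1 then (d : ℂ) / q - 1 else -1)) := by
  have hζ0 : ζ ≠ 0 := fun h => by simp [h, zero_pow hd.ne'] at hζd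
  by_cases hq1 : ζ ^ q = 1
  · rw [if_pos hq1]
    -- use slope quotients on 𝓝[≠] ζ
    have hsub : {T : ℂ | T ^ q ≠ 1} ⊆ {ζ}ᶜ := by
      intro T hT h
      simp only [Set.mem_singleton_iff] at h
      exact hT (h ▸ hq1)
    have hderivd : HasDerivAt (fun T : ℂ => T ^ d) (d * ζ ^ (d - 1)) ζ := hasDerivAt_pow d ζ
    have hderivq : HasDerivAt (fun T : ℂ => T ^ q) (q * ζ ^ (q - 1)) ζ := hasDerivAt_pow q ζ
    have hsd := hasDerivAt_iff_tendsto_slope.mp hderivd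
    have hsq := hasDerivAt_iff_tendsto_slope.mp hderivq
    have hζinv : ζ ^ (d - 1) = ζ⁻¹ := by
      field_simp
      calc ζ ^ (d-1) * ζ = ζ ^ (d - 1 + 1) := (pow_succ ζ (d-1)).symm
        _ = 1 := by rw [Nat.sub_add_cancel hd]; exact hζd
    have hζinvq : ζ ^ (q - 1) = ζ⁻¹ := by
      field_simp
      calc ζ ^ (q-1) * ζ = ζ ^ (q - 1 + 1) := (pow_succ ζ (q-1)).symm
        _ = 1 := by rw [Nat.sub_add_cancel hq]; exact hq1
    have hqne : (q : ℂ) * ζ ^ (q - 1) ≠ 0 := by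
      rw [hζinvq]
      exact mul_ne_zero (Nat.cast_ne_zero.mpr hq.ne') (inv_ne_zero hζ0)
    have hratio : Tendsto (fun T : ℂ => slope (fun T : ℂ => T ^ d) ζ T / slope (fun T : ℂ => T ^ q) ζ T)
        (𝓝[≠] ζ) (𝓝 ((d * ζ ^ (d - 1)) / (q * ζ ^ (q - 1)))) := hsd.div hsq hqne
    have hval : (↑d * ζ ^ (d - 1)) / (↑q * ζ ^ (q - 1)) = (d : ℂ) / q := by
      rw [hζinv, hζinvq]
      rw [mul_div_mul_right _ _ (inv_ne_zero hζ0)]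
    rw [hval] at hratio
    have hg : Tendsto (fun T : ℂ =>
        slope (fun T : ℂ => T ^ d) ζ T / slope (fun T : ℂ => T ^ q) ζ T - 1)
        (𝓝[{T : ℂ | T ^ q ≠ 1}] ζ) (𝓝 ((d : ℂ) / q - 1)) :=
      (hratio.mono_left (nhdsWithin_mono ζ hsub)).sub tendsto_const_nhds
    refine hg.congr' ?_
    filter_upwards [self_mem_nhdsWithin] with T hT
    have hTζ : T ≠ ζ := fun h => hT (h ▸ hq1)
    have hTq : T ^ q - 1 ≠ 0 := sub_ne_zero.mpr hT
    have hTs : T - ζ ≠ 0 := sub_ne_zero.mpr hTζ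
    simp only [slope_def_field]
    rw [hζd, hq1]
    field_simp
    ring
  · rw [if_neg hq1]
    have hcont : ContinuousAt (fun T : ℂ => (T ^ d - T ^ q) / (T ^ q - 1)) ζ := by
      apply ContinuousAt.div
      · fun_prop
      · fun_prop
      · exact sub_ne_zero.mpr hq1
    have := hcont.continuousWithinAt (s := {T : ℂ | T ^ q ≠ 1})
    have hval : (ζ ^ d - ζ ^ q) / (ζ ^ q - 1) = -1 := by
      rw [hζd]
      rw [div_eq_iff (sub_ne_zero.mpr hq1)]
      ring
    rw [ContinuousWithinAt, hval] at this
    exact this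

/-- Milnor–Orlik formula: for positive integers `d, q₁, q₂, q₃`, an integer `k`, and
`ζ = exp(2π√-1·k/d)`, the function
`Φ(T) = T^(-d) · ∏ⱼ (T^d - T^(qⱼ))/(T^(qⱼ) - 1)` tends, as `T → ζ` within
`{T : ℂ | T^(qⱼ) ≠ 1 for j = 1,2,3}`, to `∏ⱼ ((d/qⱼ)·[d ∣ k·qⱼ] - 1)`. -/
theorem milnor_orlik_limit (d q₁ q₂ q₃ : ℕ) (hd : 0 < d)
    (h₁ : 0 < q₁) (h₂ : 0 < q₂) (h₃ : 0 < q₃) (k : ℤ)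
    (ζ : ℂ) (hζ : ζ = Complex.exp (2 * Real.pi * Complex.I * k / d)) :
    Tendsto
      (fun T : ℂ => T ^ (-(d : ℤ)) *
        ((T ^ d - T ^ q₁) / (T ^ q₁ - 1) * ((T ^ d - T ^ q₂) / (T ^ q₂ - 1) *
          ((T ^ d - T ^ q₃) / (T ^ q₃ - 1)))))
      (nhdsWithin ζ {T : ℂ | T ^ q₁ ≠ 1 ∧ T ^ q₂ ≠ 1 ∧ T ^ q₃ ≠ 1})
      (nhds
        (((d : ℂ) / q₁ * (if (d : ℤ) ∣ k * q₁ then 1 else 0) - 1) *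
          (((d : ℂ) / q₂ * (if (d : ℤ) ∣ k * q₂ then 1 else 0) - 1) *
            ((d : ℂ) / q₃ * (if (d : ℤ) ∣ k * q₃ then 1 else 0) - 1)))) := by
  have hζd : ζ ^ d = 1 := by
    rw [hζ, pow_root_eq_one hd k d]
    have hc : (((k * d : ℤ) : ℂ) / d) = (k : ℂ) := by
      have : (d : ℂ) ≠ 0 := Nat.cast_ne_zero.mpr hd.ne'
      push_cast
      field_simp
    rw [hc]
    exact Complex.exp_int_mul_two_pi_mul_I k
  have hζ0 : ζ ≠ 0 := fun h => by simp [h, zero_pow hd.ne'] at hζd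
  -- zpow factor
  have hz : Tendsto (fun T : ℂ => T ^ (-(d : ℤ)))
      (𝓝[{T : ℂ | T ^ q₁ ≠ 1 ∧ T ^ q₂ ≠ 1 ∧ T ^ q₃ ≠ 1}] ζ) (𝓝 1) := by
    have := (continuousAt_zpow₀ ζ (-(d : ℤ)) (Or.inl hζ0)).continuousWithinAt
      (s := {T : ℂ | T ^ q₁ ≠ 1 ∧ T ^ q₂ ≠ 1 ∧ T ^ q₃ ≠ 1})
    have hval : ζ ^ (-(d : ℤ)) = 1 := by
      rw [zpow_neg, zpow_natCast, hζd, inv_one]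
    rwa [ContinuousWithinAt, hval] at this
  have hs₁ : {T : ℂ | T ^ q₁ ≠ 1 ∧ T ^ q₂ ≠ 1 ∧ T ^ q₃ ≠ 1} ⊆ {T : ℂ | T ^ q₁ ≠ 1} :=
    fun T h => h.1
  have hs₂ : {T : ℂ | T ^ q₁ ≠ 1 ∧ T ^ q₂ ≠ 1 ∧ T ^ q₃ ≠ 1} ⊆ {T : ℂ | T ^ q₂ ≠ 1} :=
    fun T h => h.2.1
  have hs₃ : {T : ℂ | T ^ q₁ ≠ 1 ∧ T ^ q₂ ≠ 1 ∧ T ^ q₃ ≠ 1} ⊆ {T : ℂ | T ^ q₃ ≠ 1} :=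
    fun T h => h.2.2
  have F₁ := (factor_limit d q₁ hd h₁ ζ hζd).mono_left (nhdsWithin_mono ζ hs₁)
  have F₂ := (factor_limit d q₂ hd h₂ ζ hζd).mono_left (nhdsWithin_mono ζ hs₂)
  have F₃ := (factor_limit d q₃ hd h₃ ζ hζd).mono_left (nhdsWithin_mono ζ hs₃)
  have key := hz.mul (F₁.mul (F₂.mul F₃))
  have e : ∀ q : ℕ, (if ζ ^ q = 1 then (d : ℂ) / q - 1 else -1)
      = (d : ℂ) / q * (if (d : ℤ) ∣ k * q then 1 else 0) - 1 := by
    intro q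
    have hiff : ζ ^ q = 1 ↔ (d : ℤ) ∣ k * q := by
      rw [hζ]; exact root_pow_eq_one_iff hd k q
    by_cases hdvd : (d : ℤ) ∣ k * q
    · rw [if_pos (hiff.mpr hdvd), if_pos hdvd, mul_one]
    · rw [if_neg (fun h => hdvd (hiff.mp h)), if_neg hdvd, mul_zero, zero_sub]
  rw [e q₁, e q₂, e q₃, one_mul] at key
  exact key
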